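/- Let V be a finite type, K ⊆ V a terminal set, I a finite index set, and α ∈ ℝ≥0∞ with α ≥ 1. For each i ∈ I let V_i, W_i, K_i ⊆ V be subsets with K_i ⊆ K ∩ V_i ∩ W_i, and let w_i, w̃_i : V → V → ℝ≥0∞ be symmetric weight functions with w_i a b = ∞ unless a, b ∈ V_i, and w̃_i a b = ∞ unless a, b ∈ W_i. Assume: (a) for all i ≠ j, each of V_i ∩ V_j, V_i ∩ W_j, and W_i ∩ W_j is contained in K; (b) for each i, V_i ∩ K ⊆ K_i and W_i ∩ K ⊆ K_i; and (c) each w̃_i is an α-quality distance sparsifier of w_i with respect to K_i, i.e., for all s, t ∈ K_i, d_{w_i}(s,t) ≤ d_{w̃_i}(s,t) ≤ α · d_{w_i}(s,t). Define w := fun a b => ⨅ i, w_i a b and w̃ := fun a b => ⨅ i, w̃_i a b (the union graphs, taking the cheapest parallel edge). Then for all s, t ∈ K, d_w(s,t) ≤ d_{w̃}(s,t) ≤ α · d_w(s,t). (The union of α-quality vertex distance sparsifiers of the regions of an edge partition, with regions sharing only terminal vertices, is an α-quality distance sparsifier with respect to the full terminal set K; this is the correctness claim for answering shortest-path queries in the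 proof of Theorem 1.3 of the paper.) -/

import Mathlib

open BigOperators
open scoped ENNReal

/-- The walk distance from `s` to `t` with respect to the symmetric weight function `w`:
the infimum over all walks `s = v₀, v₁, …, v_k = t` of the total weight of the walk. -/
noncomputable def walkDist {V : Type*} (w : V → V → ℝ≥0∞) (s t : V) : ℝ≥0∞ :=
  ⨅ (k : ℕ) (p : Fin (k + 1) → V) (_ : p 0 = s) (_ : p (Fin.last k) = t),
    ∑ i : Fin k, w (p i.castSucc) (p i.succ)

lemma walkDist_le_sum {V : Type*} (w : V → V → ℝ≥0∞) {k : ℕ} (p : Fin (k+1) → V)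
    {s t : V} (h0 : p 0 = s) (hl : p (Fin.last k) = t) :
    walkDist w s t ≤ ∑ i : Fin k, w (p i.castSucc) (p i.succ) :=
  iInf_le_of_le k (iInf_le_of_le p (iInf_le_of_le h0 (iInf_le_of_le hl le_rfl)))

lemma walkDist_self {V : Type*} (w : V → V → ℝ≥0∞) (s : V) : walkDist w s s = 0 :=
  le_antisymm (by simpa using walkDist_le_sum w (k := 0) (fun _ => s) rfl rfl) (zero_le)

lemma walkDist_le_weight {V : Type*} (w : V → V → ℝ≥0∞) (a b : V) :
    walkDist w a b ≤ w a b := by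
  have h := walkDist_le_sum (s := a) (t := b) w (k := 1) ![a, b] (by simp) (by simp [Fin.last])
  simpa using h

lemma walkDist_mono {V : Type*} {w w' : V → V → ℝ≥0∞} (h : ∀ a b, w a b ≤ w' a b) (s t : V) :
    walkDist w s t ≤ walkDist w' s t := by
  refine le_iInf fun k => le_iInf fun p => le_iInf fun h0 => le_iInf fun hl => ?_
  exact le_trans (walkDist_le_sum w p h0 hl) (Finset.sum_le_sum fun i _ => h _ _)

lemma walkDist_concat_le {V : Type*} (w : V → V → ℝ≥0∞) {k l : ℕ}
    (p : Fin (k+1) → V) (q : Fin (l+1) → V) (hj : p (Fin.last k) = q 0) :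
    walkDist w (p 0) (q (Fin.last l)) ≤
      (∑ i : Fin k, w (p i.castSucc) (p i.succ)) + ∑ i : Fin l, w (q i.castSucc) (q i.succ) := by
  set r : Fin (k + l + 1) → V := fun j =>
    if h : (j : ℕ) < k + 1 then p ⟨j, h⟩ else q ⟨(j : ℕ) - k, by have := j.isLt; omega⟩ with hr
  have hrhi : ∀ (n : ℕ) (hn : k ≤ n) (hn' : n < k + l + 1) (hn'' : n - k < l + 1),
      r ⟨n, hn'⟩ = q ⟨n - k, hn''⟩ := by
    intro n hn hn' hn''
    by_cases h : n < k + 1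
    · have h1 : (⟨n, h⟩ : Fin (k+1)) = Fin.last k := by ext; simp [Fin.last]; omega
      have h2 : (⟨n - k, hn''⟩ : Fin (l+1)) = 0 := by ext; simp; omega
      simp only [hr, dif_pos h, h1, h2, hj]
    · simp only [hr, dif_neg h]
  have hr0 : r 0 = p 0 := by
    have h0 : (0 : Fin (k + l + 1)) = ⟨0, by omega⟩ := by ext; simp
    have h1 : (⟨0, by omega⟩ : Fin (k+1)) = 0 := by ext; simp
    rw [h0]; simp only [hr, dif_pos (show 0 < k + 1 by omega), h1]
  have hrl : r (Fin.last (k + l)) = q (Fin.last l) := by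
    have h0 : Fin.last (k + l) = ⟨k + l, by omega⟩ := rfl
    have h1 : (⟨k + l - k, by omega⟩ : Fin (l+1)) = Fin.last l := by ext; simp
    rw [h0, hrhi (k + l) (by omega) (by omega) (by omega), h1]
  have hsum : (∑ j : Fin (k + l), w (r j.castSucc) (r j.succ)) =
      (∑ i : Fin k, w (p i.castSucc) (p i.succ)) + ∑ i : Fin l, w (q i.castSucc) (q i.succ) := by
    rw [Fin.sum_univ_add]
    congr 1
    · refine Finset.sum_congr rfl fun i _ => ?_
      have e1 : r ((Fin.castAdd l i).castSucc) = p i.castSucc := by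
        have : ((Fin.castAdd l i).castSucc : Fin (k + l + 1)) = ⟨(i : ℕ), by omega⟩ := by
          ext; simp
        rw [this]
        simp only [hr, dif_pos (show (i : ℕ) < k + 1 by omega)]
        congr 1; all_goals (ext; simp)
      have e2 : r ((Fin.castAdd l i).succ) = p i.succ := by
        have : ((Fin.castAdd l i).succ : Fin (k + l + 1)) = ⟨(i : ℕ) + 1, by omega⟩ := by
          ext; simp
        rw [this]
        simp only [hr, dif_pos (show (i : ℕ) + 1 < k + 1 by omega)]
        congr 1; all_goals (ext; simp)
      rw [e1, e2]
    · refine Finset.sum_congr rfl fun i _ => ?_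
      have e1 : r ((Fin.natAdd k i).castSucc) = q i.castSucc := by
        have h0 : ((Fin.natAdd k i).castSucc : Fin (k + l + 1)) = ⟨k + (i : ℕ), by omega⟩ := by
          ext; simp
        rw [h0, hrhi (k + (i : ℕ)) (by omega) (by omega) (by omega)]
        congr 1; all_goals (ext; simp)
      have e2 : r ((Fin.natAdd k i).succ) = q i.succ := by
        have h0 : ((Fin.natAdd k i).succ : Fin (k + l + 1)) = ⟨k + (i : ℕ) + 1, by omega⟩ := by
          ext; simp
        rw [h0, hrhi (k + (i : ℕ) + 1) (by omega) (by omega) (by omega)]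
        congr 1; all_goals (ext; simp; omega)
      rw [e1, e2]
  rw [← hsum, ← hr0, ← hrl]
  exact walkDist_le_sum w r rfl rfl

lemma walkDist_triangle {V : Type*} (w : V → V → ℝ≥0∞) (a c b : V) :
    walkDist w a b ≤ walkDist w a c + walkDist w c b := by
  conv_rhs => rw [walkDist, walkDist]
  simp only [ENNReal.iInf_add, ENNReal.add_iInf]
  refine le_iInf fun k => le_iInf fun p => le_iInf fun hp0 => le_iInf fun hpl =>
    le_iInf fun l => le_iInf fun q => le_iInf fun hq0 => le_iInf fun hql => ?_
  have := walkDist_concat_le w q p (by rw [hql, hp0])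
  rw [hq0, hpl] at this
  exact this

lemma seg_claim {V I : Type*} [Fintype I] {K : Set V} {Sf Kf : I → Set V}
    {v : I → V → V → ℝ≥0∞} {T : V → V → ℝ≥0∞} {β : ℝ≥0∞} (hβ : β ≠ 0)
    (hsupp : ∀ i a b, ¬ (a ∈ Sf i ∧ b ∈ Sf i) → v i a b = ⊤)
    (hshare : ∀ i j, i ≠ j → Sf i ∩ Sf j ⊆ K)
    (hterm : ∀ i, Sf i ∩ K ⊆ Kf i)
    (hq : ∀ i s t, s ∈ Kf i → t ∈ Kf i → walkDist T s t ≤ β * walkDist (v i) s t) :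
    ∀ (k : ℕ) (p : Fin (k+1) → V) (i : I) (q : V), q ∈ Kf i → p 0 ∈ Sf i →
      p (Fin.last k) ∈ K →
      walkDist T q (p (Fin.last k)) ≤
        β * (walkDist (v i) q (p 0) + ∑ j : Fin k, ⨅ l, v l (p j.castSucc) (p j.succ)) := by
  intro k
  induction k with
  | zero =>
    intro p i q hqK hp0 hpl
    have h0 : p (Fin.last 0) = p 0 := rfl
    rw [h0] at hpl ⊢
    have hp0K : p 0 ∈ Kf i := hterm i ⟨hp0, hpl⟩
    refine (hq i q (p 0) hqK hp0K).trans (mul_le_mul_right le_self_add β)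
  | succ k ih =>
    intro p i q hqK hp0 hpl
    have hsum : (∑ j : Fin (k+1), ⨅ l, v l (p j.castSucc) (p j.succ)) =
        (⨅ l, v l (p 0) (p 1)) +
          ∑ j : Fin k, ⨅ l, v l ((p ∘ Fin.succ) j.castSucc) ((p ∘ Fin.succ) j.succ) := by
      rw [Fin.sum_univ_succ]
      congr 1
    set e := ⨅ l, v l (p 0) (p 1) with he
    have hlast : (p ∘ Fin.succ) (Fin.last k) = p (Fin.last (k+1)) := by
      rw [Function.comp_apply, Fin.succ_last]
    rw [hsum]
    by_cases htop : e = ⊤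
    · rw [htop, top_add, add_top, ENNReal.mul_top hβ]
      exact le_top
    · have hne : Nonempty I := by
        by_contra h
        rw [not_nonempty_iff] at h
        exact htop (he.trans (iInf_of_empty _))
      obtain ⟨j0, hj0⟩ := exists_eq_ciInf_of_finite (f := fun l => v l (p 0) (p 1))
      rw [← he] at hj0
      have hpj : p 0 ∈ Sf j0 ∧ p 1 ∈ Sf j0 := by
        by_contra h
        exact htop (hj0.symm.trans (hsupp j0 _ _ h))
      by_cases hvi : v i (p 0) (p 1) = e
      · have hpi : p 0 ∈ Sf i ∧ p 1 ∈ Sf i := by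
          by_contra h
          exact htop (hvi.symm.trans (hsupp i _ _ h))
        have hstep := ih (p ∘ Fin.succ) i q hqK
          (show (p ∘ Fin.succ) 0 ∈ Sf i from hpi.2) (by rw [hlast]; exact hpl)
        rw [hlast] at hstep
        refine hstep.trans (mul_le_mul_right ?_ β)
        have h1 : walkDist (v i) q (p 1) ≤ walkDist (v i) q (p 0) + e :=
          (walkDist_triangle _ _ (p 0) _).trans
            (add_le_add_right ((walkDist_le_weight _ _ _).trans hvi.le) _)
        calc walkDist (v i) q ((p ∘ Fin.succ) 0) +
              ∑ j : Fin k, ⨅ l, v l ((p ∘ Fin.succ) j.castSucc) ((p ∘ Fin.succ) j.succ)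
            ≤ (walkDist (v i) q (p 0) + e) +
              ∑ j : Fin k, ⨅ l, v l ((p ∘ Fin.succ) j.castSucc) ((p ∘ Fin.succ) j.succ) :=
              add_le_add_left h1 _
          _ = _ := add_assoc _ _ _
      · have hij : i ≠ j0 := fun h => hvi (h ▸ hj0)
        have hp0K : p 0 ∈ K := hshare i j0 hij ⟨hp0, hpj.1⟩
        have hp0Kfi : p 0 ∈ Kf i := hterm i ⟨hp0, hp0K⟩
        have hp0Kfj : p 0 ∈ Kf j0 := hterm j0 ⟨hpj.1, hp0K⟩
        have h2 := ih (p ∘ Fin.succ) j0 (p 0) hp0Kfj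
          (show (p ∘ Fin.succ) 0 ∈ Sf j0 from hpj.2) (by rw [hlast]; exact hpl)
        rw [hlast] at h2
        have h1 : walkDist T q (p 0) ≤ β * walkDist (v i) q (p 0) := hq i _ _ hqK hp0Kfi
        have h3 : walkDist (v j0) (p 0) ((p ∘ Fin.succ) 0) ≤ e :=
          (walkDist_le_weight _ _ _).trans hj0.le
        calc walkDist T q (p (Fin.last (k+1)))
            ≤ walkDist T q (p 0) + walkDist T (p 0) (p (Fin.last (k+1))) :=
              walkDist_triangle _ _ _ _
          _ ≤ β * walkDist (v i) q (p 0) +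
              β * (walkDist (v j0) (p 0) ((p ∘ Fin.succ) 0) +
                ∑ j : Fin k, ⨅ l, v l ((p ∘ Fin.succ) j.castSucc) ((p ∘ Fin.succ) j.succ)) :=
              add_le_add h1 h2
          _ ≤ β * walkDist (v i) q (p 0) +
              β * (e + ∑ j : Fin k, ⨅ l, v l ((p ∘ Fin.succ) j.castSucc) ((p ∘ Fin.succ) j.succ)) :=
              add_le_add_right (mul_le_mul_right (add_le_add_left h3 _) β) _
          _ = β * (walkDist (v i) q (p 0) +
              (e + ∑ j : Fin k, ⨅ l, v l ((p ∘ Fin.succ) j.castSucc) ((p ∘ Fin.succ) j.succ))) :=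
              (mul_add _ _ _).symm

lemma main_bound {V I : Type*} [Fintype I] {K : Set V} {Sf Kf : I → Set V}
    {v : I → V → V → ℝ≥0∞} {T : V → V → ℝ≥0∞} {β : ℝ≥0∞} (hβ : β ≠ 0)
    (hsupp : ∀ i a b, ¬ (a ∈ Sf i ∧ b ∈ Sf i) → v i a b = ⊤)
    (hshare : ∀ i j, i ≠ j → Sf i ∩ Sf j ⊆ K)
    (hterm : ∀ i, Sf i ∩ K ⊆ Kf i)
    (hq : ∀ i s t, s ∈ Kf i → t ∈ Kf i → walkDist T s t ≤ β * walkDist (v i) s t) :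
    ∀ (k : ℕ) (p : Fin (k+1) → V), p 0 ∈ K → p (Fin.last k) ∈ K →
      walkDist T (p 0) (p (Fin.last k)) ≤
        β * ∑ j : Fin k, ⨅ l, v l (p j.castSucc) (p j.succ) := by
  intro k
  match k with
  | 0 =>
    intro p h0 hl
    rw [show p (Fin.last 0) = p 0 from rfl, walkDist_self]
    exact zero_le
  | Nat.succ k =>
    intro p h0 hl
    by_cases htop : (⨅ l, v l (p 0) (p 1)) = ⊤
    · have hs : (∑ j : Fin (k+1), ⨅ l, v l (p j.castSucc) (p j.succ)) = ⊤ := by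
        have h01 : (fun j : Fin (k+1) => ⨅ l, v l (p j.castSucc) (p j.succ)) 0 = ⊤ := by
          simpa using htop
        rw [eq_top_iff]
        exact le_trans (le_of_eq h01.symm) (Finset.single_le_sum (f := fun j : Fin (k+1) =>
          ⨅ l, v l (p j.castSucc) (p j.succ)) (fun _ _ => zero_le) (Finset.mem_univ 0))
      rw [hs, ENNReal.mul_top hβ]
      exact le_top
    · have hne : Nonempty I := by
        by_contra h
        rw [not_nonempty_iff] at h
        exact htop (iInf_of_empty _)
      obtain ⟨j0, hj0⟩ := exists_eq_ciInf_of_finite (f := fun l => v l (p 0) (p 1))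
      have hpj : p 0 ∈ Sf j0 ∧ p 1 ∈ Sf j0 := by
        by_contra h
        exact htop (hj0 ▸ hsupp j0 _ _ h)
      have hp0Kf : p 0 ∈ Kf j0 := hterm j0 ⟨hpj.1, h0⟩
      have := seg_claim hβ hsupp hshare hterm hq (k+1) p j0 (p 0) hp0Kf hpj.1 hl
      rwa [walkDist_self, zero_add] at this

theorem distance_sparsifier_union
    {V I : Type*} [Fintype V] [Fintype I]
    (K : Set V) (α : ℝ≥0∞) (hα : 1 ≤ α)
    (Vf Wf Kf : I → Set V)
    (hKf : ∀ i : I, Kf i ⊆ K ∩ Vf i ∩ Wf i)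
    (w wtil : I → V → V → ℝ≥0∞)
    (hwsymm : ∀ i a b, w i a b = w i b a)
    (hwtsymm : ∀ i a b, wtil i a b = wtil i b a)
    (hwsupp : ∀ i a b, ¬ (a ∈ Vf i ∧ b ∈ Vf i) → w i a b = ⊤)
    (hwtsupp : ∀ i a b, ¬ (a ∈ Wf i ∧ b ∈ Wf i) → wtil i a b = ⊤)
    (hshare : ∀ i j : I, i ≠ j →
      Vf i ∩ Vf j ⊆ K ∧ Vf i ∩ Wf j ⊆ K ∧ Wf i ∩ Wf j ⊆ K)
    (hbound : ∀ i : I, Vf i ∩ K ⊆ Kf i ∧ Wf i ∩ K ⊆ Kf i)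
    (hquality : ∀ i : I, ∀ s t : V, s ∈ Kf i → t ∈ Kf i →
      walkDist (w i) s t ≤ walkDist (wtil i) s t ∧
      walkDist (wtil i) s t ≤ α * walkDist (w i) s t) :
    ∀ s t : V, s ∈ K → t ∈ K →
      walkDist (fun a b => ⨅ i, w i a b) s t ≤ walkDist (fun a b => ⨅ i, wtil i a b) s t ∧
      walkDist (fun a b => ⨅ i, wtil i a b) s t ≤
        α * walkDist (fun a b => ⨅ i, w i a b) s t := by
  intro s t hs ht
  have hα0 : α ≠ 0 := fun h => by simp [h] at hα
  -- direction 1 machinery : T = union of w, v = wtil, Sf = Wf, β = 1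
  have hq1 : ∀ i s t, s ∈ Kf i → t ∈ Kf i →
      walkDist (fun a b => ⨅ i, w i a b) s t ≤ 1 * walkDist (wtil i) s t := by
    intro i s t hsi hti
    rw [one_mul]
    exact (walkDist_mono (fun a b => iInf_le _ i) s t).trans (hquality i s t hsi hti).1
  have hmb1 := main_bound (K := K) (Sf := Wf) (Kf := Kf) (v := wtil)
    (T := fun a b => ⨅ i, w i a b) (β := 1) one_ne_zero hwtsupp
    (fun i j hij => (hshare i j hij).2.2) (fun i => (hbound i).2) hq1
  -- direction 2 machinery : T = union of wtil, v = w, Sf = Vf, β = α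
  have hq2 : ∀ i s t, s ∈ Kf i → t ∈ Kf i →
      walkDist (fun a b => ⨅ i, wtil i a b) s t ≤ α * walkDist (w i) s t := by
    intro i s t hsi hti
    exact (walkDist_mono (fun a b => iInf_le _ i) s t).trans (hquality i s t hsi hti).2
  have hmb2 := main_bound (K := K) (Sf := Vf) (Kf := Kf) (v := w)
    (T := fun a b => ⨅ i, wtil i a b) (β := α) hα0 hwsupp
    (fun i j hij => (hshare i j hij).1) (fun i => (hbound i).1) hq2
  constructor
  · refine le_iInf fun k => le_iInf fun p => le_iInf fun h0 => le_iInf fun hl => ?_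
    have := hmb1 k p (h0.symm ▸ hs) (hl.symm ▸ ht)
    rw [h0, hl, one_mul] at this
    exact this
  · by_cases hatop : α = ⊤
    · by_cases hD : walkDist (fun a b => ⨅ i, w i a b) s t = 0
      · rw [hD, mul_zero]
        -- find a zero-weight walk
        set u : V → V → ℝ≥0∞ := fun a b => ⨅ i, w i a b with hu
        set δ : ℝ≥0∞ := ⨅ x : {x : V × V // u x.1 x.2 ≠ 0}, u x.1.1 x.1.2 with hδ
        have hδpos : 0 < δ := by
          rcases isEmpty_or_nonempty {x : V × V // u x.1 x.2 ≠ 0} with hP | hP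
          · rw [hδ, iInf_of_empty]; exact ENNReal.zero_lt_top.trans_le le_top
          · rw [pos_iff_ne_zero]
            intro h0
            obtain ⟨x, hx⟩ := exists_eq_ciInf_of_finite
              (f := fun x : {x : V × V // u x.1 x.2 ≠ 0} => u x.1.1 x.1.2)
            exact x.2 (hx.trans (hδ ▸ h0))
        have hlt2 : walkDist u s t < δ := by rw [hD]; exact hδpos
        rw [walkDist] at hlt2
        simp only [iInf_lt_iff] at hlt2
        obtain ⟨k, p, h0, hl, hsum⟩ := hlt2
        have hzero : ∀ j : Fin k, u (p j.castSucc) (p j.succ) = 0 := by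
          intro j
          by_contra hne
          have h1 : δ ≤ u (p j.castSucc) (p j.succ) :=
            iInf_le (fun x : {x : V × V // u x.1 x.2 ≠ 0} => u x.1.1 x.1.2)
              ⟨(p j.castSucc, p j.succ), hne⟩
          have h2 : u (p j.castSucc) (p j.succ) ≤ ∑ i : Fin k, u (p i.castSucc) (p i.succ) :=
            Finset.single_le_sum (f := fun i : Fin k => u (p i.castSucc) (p i.succ))
              (fun _ _ => zero_le) (Finset.mem_univ j)
          exact absurd (lt_of_le_of_lt (h1.trans h2) hsum) (lt_irrefl δ)
        have hsum0 : (∑ j : Fin k, ⨅ l, w l (p j.castSucc) (p j.succ)) = 0 :=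
          Finset.sum_eq_zero fun j _ => hzero j
        have := hmb2 k p (h0.symm ▸ hs) (hl.symm ▸ ht)
        rw [h0, hl, hsum0, mul_zero] at this
        exact this
      · rw [hatop, ENNReal.top_mul hD]
        exact le_top
    · by_cases hD : walkDist (fun a b => ⨅ i, w i a b) s t = ⊤
      · rw [hD, ENNReal.mul_top hα0]
        exact le_top
      · refine ENNReal.le_of_forall_pos_le_add fun ε hε hfin => ?_
        set ε' : ℝ≥0∞ := (ε : ℝ≥0∞) / α with hε'
        have hε'pos : ε' ≠ 0 := by
          rw [hε']
          simp [ENNReal.div_eq_zero_iff, hatop]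
          exact_mod_cast hε.ne'
        have hlt2 : walkDist (fun a b => ⨅ i, w i a b) s t <
            walkDist (fun a b => ⨅ i, w i a b) s t + ε' :=
          ENNReal.lt_add_right hD hε'pos
        nth_rewrite 1 [walkDist] at hlt2
        simp only [iInf_lt_iff] at hlt2
        obtain ⟨k, p, h0, hl, hsum⟩ := hlt2
        have hmb := hmb2 k p (h0.symm ▸ hs) (hl.symm ▸ ht)
        rw [h0, hl] at hmb
        calc walkDist (fun a b => ⨅ i, wtil i a b) s t
            ≤ α * ∑ j : Fin k, ⨅ l, w l (p j.castSucc) (p j.succ) := hmb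
          _ ≤ α * (walkDist (fun a b => ⨅ i, w i a b) s t + ε') :=
              mul_le_mul_right hsum.le α
          _ = α * walkDist (fun a b => ⨅ i, w i a b) s t + α * ε' := mul_add _ _ _
          _ = α * walkDist (fun a b => ⨅ i, w i a b) s t + ε := by
              rw [hε', ENNReal.mul_div_cancel hα0 hatop]
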